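/- Let S be a group in which every finitely generated subgroup is a virtual retract. Then in the group P = Multiplicative ℤ × S every finitely generated subgroup is a virtual retract: for every subgroup Γ of P with Γ.FG there exist a finite-index subgroup P₀ of P with Γ ≤ P₀ and a group homomorphism r : P₀ →* P such that r g = g for all g ∈ Γ and r x ∈ Γ for all x ∈ P₀. -/

import Mathlib

/-- A subgroup `Γ` of `π` is a virtual retract of `π` if some finite-index subgroup `π₀`
of `π` contains `Γ` and retracts onto it. -/
def IsVirtualRetract {π : Type} [Group π] (Γ : Subgroup π) : Prop :=
  ∃ (π₀ : Subgroup π) (_ : π₀.FiniteIndex) (hle : Γ ≤ π₀) (r : π₀ →* π),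
    (∀ g (hg : g ∈ Γ), r ⟨g, hle hg⟩ = g) ∧ ∀ x : π₀, r x ∈ Γ

lemma Subgroup.FG.map' {G G' : Type*} [Group G] [Group G'] {H : Subgroup G} (h : H.FG)
    (f : G →* G') : (H.map f).FG := by
  rw [Subgroup.fg_iff] at h ⊢
  obtain ⟨s, hs, hsfin⟩ := h
  exact ⟨f '' s, by rw [← MonoidHom.map_closure, hs], hsfin.image f⟩

/-- If every finitely generated subgroup of `S` is a virtual retract, then every finitely
generated subgroup of `Multiplicative ℤ × S` is a virtual retract. -/
theorem virtual_retract_of_product (S : Type) [Group S]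
    (hS : ∀ Γ : Subgroup S, Γ.FG → IsVirtualRetract Γ) :
    ∀ Γ : Subgroup (Multiplicative ℤ × S), Γ.FG → IsVirtualRetract Γ := by
  intro Γ hΓ
  set ΓS : Subgroup S := Γ.map (MonoidHom.snd (Multiplicative ℤ) S) with hΓSdef
  obtain ⟨S₀, hfin, hleS, r, hr1, hr2⟩ := hS ΓS (hΓ.map' _)
  set Pbig : Subgroup (Multiplicative ℤ × S) :=
    (⊤ : Subgroup (Multiplicative ℤ)).prod S₀ with hPbigdef
  have hPbigFin : Pbig.FiniteIndex :=
    ⟨by rw [hPbigdef, Subgroup.index_prod, Subgroup.index_top, one_mul]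
        exact hfin.index_ne_zero⟩
  have hmem2 : ∀ x : Pbig, (x : Multiplicative ℤ × S).2 ∈ S₀ :=
    fun x => (Subgroup.mem_prod.mp x.2).2
  set snd0 : Pbig →* S₀ :=
    ((MonoidHom.snd (Multiplicative ℤ) S).comp Pbig.subtype).codRestrict S₀ hmem2 with hsnd0
  have hΓle : Γ ≤ Pbig := by
    intro g hg
    exact Subgroup.mem_prod.mpr ⟨trivial, hleS ⟨g, hg, rfl⟩⟩
  have hgs : ∀ g : Multiplicative ℤ × S, g ∈ Γ → g.2 ∈ ΓS := fun g hg => ⟨g, hg, rfl⟩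
  by_cases hA : ∀ z : Multiplicative ℤ, ((z, (1 : S)) : Multiplicative ℤ × S) ∈ Γ → z = 1
  · -- the case where Γ meets the ℤ factor trivially: Γ is a graph over ΓS
    set f : Γ →* ΓS :=
      ((MonoidHom.snd (Multiplicative ℤ) S).comp Γ.subtype).codRestrict ΓS
        (fun γ => hgs _ γ.2) with hfdef
    have hfbij : Function.Bijective f := by
      constructor
      · intro a b hab
        have h2 : (a : Multiplicative ℤ × S).2 = (b : Multiplicative ℤ × S).2 :=
          congrArg Subtype.val hab
        have hmul : ((a : Multiplicative ℤ × S) * (b : Multiplicative ℤ × S)⁻¹) ∈ Γ :=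
          mul_mem a.2 (inv_mem b.2)
        have h1 : (a : Multiplicative ℤ × S).1 * ((b : Multiplicative ℤ × S).1)⁻¹ = 1 := by
          apply hA
          have : ((a : Multiplicative ℤ × S) * (b : Multiplicative ℤ × S)⁻¹) =
              ((a : Multiplicative ℤ × S).1 * ((b : Multiplicative ℤ × S).1)⁻¹, (1 : S)) := by
            ext
            · rfl
            · show (a : Multiplicative ℤ × S).2 * ((b : Multiplicative ℤ × S).2)⁻¹ = 1
              rw [h2, mul_inv_cancel]
          rwa [this] at hmul
        have : (a : Multiplicative ℤ × S).1 = (b : Multiplicative ℤ × S).1 :=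
          mul_inv_eq_one.mp h1
        exact Subtype.ext (Prod.ext this h2)
      · rintro ⟨s, hs⟩
        obtain ⟨γ, hγ, hγ2⟩ := hs
        exact ⟨⟨γ, hγ⟩, Subtype.ext hγ2⟩
    set e : Γ ≃* ΓS := MulEquiv.ofBijective f hfbij with hedef
    set r' : S₀ →* ΓS := r.codRestrict ΓS hr2 with hr'def
    set ρ : Pbig →* Multiplicative ℤ × S :=
      Γ.subtype.comp (e.symm.toMonoidHom.comp (r'.comp snd0)) with hρdef
    refine ⟨Pbig, hPbigFin, hΓle, ρ, ?_, ?_⟩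
    · intro g hg
      have hg2 : g.2 ∈ ΓS := hgs g hg
      have hfr : r' (snd0 ⟨g, hΓle hg⟩) = f ⟨g, hg⟩ := by
        apply Subtype.ext
        show r ⟨g.2, _⟩ = g.2
        exact hr1 g.2 hg2
      show (e.symm (r' (snd0 ⟨g, hΓle hg⟩)) : Multiplicative ℤ × S) = g
      rw [hfr, show f ⟨g, hg⟩ = e ⟨g, hg⟩ from rfl, e.symm_apply_apply]
    · intro x
      exact (e.symm (r' (snd0 x))).2
  · -- the case where Γ contains a nontrivial element of the ℤ factor
    push_neg at hA
    obtain ⟨z, hz, hzne⟩ := hA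
    set n : ℤ := Multiplicative.toAdd z with hndef
    have hnne : n ≠ 0 := fun h => hzne (by
      have : z = Multiplicative.ofAdd 0 := by rw [← h]; rfl
      simpa using this)
    set m : ℕ := n.natAbs with hmdef
    haveI : NeZero m := ⟨Int.natAbs_ne_zero.mpr hnne⟩
    set Q : Pbig →* Multiplicative ℤ × S :=
      ((MonoidHom.fst (Multiplicative ℤ) S).comp Pbig.subtype).prod (r.comp snd0) with hQdef
    have hQapp : ∀ x : Pbig, Q x = ((x : Multiplicative ℤ × S).1, r (snd0 x)) := fun x => rfl
    have hQΓ : ∀ (g : Multiplicative ℤ × S) (hg : g ∈ Γ), Q ⟨g, hΓle hg⟩ = g := by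
      intro g hg
      rw [hQapp]
      exact Prod.ext rfl (hr1 g.2 (hgs g hg))
    set W : Subgroup (Multiplicative ℤ × S) :=
      (⊤ : Subgroup (Multiplicative ℤ)).prod ΓS with hWdef
    -- the quotient of W by Γ is finite
    have hsurj : ∃ φ : ZMod m → W ⧸ Γ.subgroupOf W, Function.Surjective φ := by
      refine ⟨fun j => QuotientGroup.mk
        ⟨(Multiplicative.ofAdd (j.val : ℤ), (1 : S)),
          Subgroup.mem_prod.mpr ⟨trivial, one_mem _⟩⟩, ?_⟩
      intro q
      induction q using QuotientGroup.induction_on with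
      | H w =>
        obtain ⟨⟨a, s⟩, hw⟩ := w
        have hs : s ∈ ΓS := (Subgroup.mem_prod.mp hw).2
        obtain ⟨γ, hγΓ, hγ2⟩ := hs
        set k : ℤ := Multiplicative.toAdd a with hkdef
        set k₀ : ℤ := Multiplicative.toAdd γ.1 with hk0def
        set d : ℤ := k - k₀ with hddef
        refine ⟨(d : ZMod m), ?_⟩
        set jv : ℤ := ((d : ZMod m).val : ℤ) with hjvdef
        have hdvd : (n : ℤ) ∣ d - jv := by
          have h1 : ((d - jv : ℤ) : ZMod m) = 0 := by
            rw [hjvdef]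
            push_cast
            rw [ZMod.natCast_val, ZMod.cast_id]
            ring
          have h2 : (m : ℤ) ∣ d - jv := (ZMod.intCast_zmod_eq_zero_iff_dvd _ _).mp h1
          rwa [hmdef, Int.natAbs_dvd] at h2
        obtain ⟨t, ht⟩ := hdvd
        have hkey : ((Multiplicative.ofAdd (k - jv), s) : Multiplicative ℤ × S) ∈ Γ := by
          have h1 : ((z, (1 : S)) : Multiplicative ℤ × S) ^ t ∈ Γ := zpow_mem hz t
          have h2 := mul_mem hγΓ h1
          have h3 : γ * ((z, (1 : S)) : Multiplicative ℤ × S) ^ t =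
              (Multiplicative.ofAdd (k - jv), s) := by
            ext
            · show γ.1 * z ^ t = Multiplicative.ofAdd (k - jv)
              apply Multiplicative.toAdd.injective
              simp only [toAdd_mul, toAdd_zpow, toAdd_ofAdd]
              rw [← hk0def, ← hndef]
              have : k - jv = k₀ + (d - jv) := by rw [hddef]; ring
              rw [this, ht, smul_eq_mul]
              ring
            · show γ.2 * (1 : S) ^ t = s
              rw [one_zpow, mul_one]; exact hγ2
          rwa [h3] at h2
        rw [QuotientGroup.eq, Subgroup.mem_subgroupOf]
        show ((⟨(Multiplicative.ofAdd jv, (1 : S)), _⟩ : W) : Multiplicative ℤ × S)⁻¹ *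
          ((⟨(a, s), hw⟩ : W) : Multiplicative ℤ × S) ∈ Γ
        have : ((Multiplicative.ofAdd jv, (1 : S)) : Multiplicative ℤ × S)⁻¹ * (a, s) =
            (Multiplicative.ofAdd (k - jv), s) := by
          ext
          · show (Multiplicative.ofAdd jv)⁻¹ * a = Multiplicative.ofAdd (k - jv)
            apply Multiplicative.toAdd.injective
            simp only [toAdd_mul, toAdd_inv, toAdd_ofAdd]
            rw [← hkdef]; ring
          · show (1 : S)⁻¹ * s = s
            rw [inv_one, one_mul]
        rw [this]
        exact hkey
    obtain ⟨φ, hφ⟩ := hsurj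
    haveI : Finite (W ⧸ Γ.subgroupOf W) := Finite.of_surjective φ hφ
    haveI hWfin : (Γ.subgroupOf W).FiniteIndex := Subgroup.finiteIndex_of_finite_quotient
    have hrelW : Γ.relIndex W ≠ 0 := hWfin.index_ne_zero
    have hQrange : Q.range ≤ W := by
      rintro x ⟨y, rfl⟩
      rw [hQapp]
      exact Subgroup.mem_prod.mpr ⟨trivial, hr2 (snd0 y)⟩
    have hrelQ : Γ.relIndex Q.range ≠ 0 :=
      fun h => hrelW (Subgroup.relIndex_eq_zero_of_le_right hQrange h)
    set P₀sub : Subgroup Pbig := Γ.comap Q with hP₀subdef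
    set P₀ : Subgroup (Multiplicative ℤ × S) := P₀sub.map Pbig.subtype with hP₀def
    have hP₀fin : P₀.FiniteIndex := by
      constructor
      rw [hP₀def, Subgroup.index_map, Subgroup.ker_subtype, sup_bot_eq, Subgroup.range_subtype,
        hP₀subdef, Subgroup.index_comap]
      exact mul_ne_zero hrelQ hPbigFin.index_ne_zero
    have hP₀leBig : P₀ ≤ Pbig := Subgroup.map_subtype_le _
    have hΓleP₀ : Γ ≤ P₀ := by
      intro g hg
      refine ⟨⟨g, hΓle hg⟩, ?_, rfl⟩
      show Q ⟨g, hΓle hg⟩ ∈ Γ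
      rw [hQΓ g hg]; exact hg
    set ρ : P₀ →* Multiplicative ℤ × S := Q.comp (Subgroup.inclusion hP₀leBig) with hρdef
    have hinclmem : ∀ x : P₀, (Subgroup.inclusion hP₀leBig x) ∈ P₀sub := by
      intro x
      obtain ⟨y, hy, hyx⟩ := x.2
      have : Subgroup.inclusion hP₀leBig x = y := Subtype.ext hyx.symm
      rw [this]; exact hy
    refine ⟨P₀, hP₀fin, hΓleP₀, ρ, ?_, ?_⟩
    · intro g hg
      show Q (Subgroup.inclusion hP₀leBig ⟨g, hΓleP₀ hg⟩) = g
      have : Subgroup.inclusion hP₀leBig ⟨g, hΓleP₀ hg⟩ = ⟨g, hΓle hg⟩ := Subtype.ext rfl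
      rw [this]
      exact hQΓ g hg
    · intro x
      exact hinclmem x
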